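/- If X, Y ⊆ P are nonempty, r ∈ P, X ∪ Y ∉ Γ, and X ∪ Y ∪ {r} ∈ Γ, then 1 ≤ h(X ∪ {r}) − h(X), i.e., H(S) ≤ H(X ∪ {r}) − H(X). -/

import Mathlib

open MeasureTheory Finset

/-- Shannon entropy of a random variable with values in a finite type:
`H(f) = ∑ₐ −P(f = a)·log P(f = a)`. -/
noncomputable def shannonEntropy {Ω : Type} [MeasurableSpace Ω] {α : Type} [Fintype α]
    (μ : Measure Ω) (f : Ω → α) : ℝ :=
  ∑ a : α, Real.negMulLog ((μ (f ⁻¹' {a})).toReal)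

/-- A family of random variables on a common probability space: one (finite-valued)
random variable `secret` for the secret, and one random variable `share p` for the
share of each participant `p`. -/
structure Scheme (P : Type) [Fintype P] [DecidableEq P] where
  (Ω : Type)
  [mΩ : MeasurableSpace Ω]
  (μ : Measure Ω)
  [prob : IsProbabilityMeasure μ]
  (SecT : Type)
  [secFin : Fintype SecT]
  (ShT : P → Type)
  [shFin : ∀ p, Fintype (ShT p)]
  (secret : Ω → SecT)
  (share : (p : P) → Ω → ShT p)
  (secret_meas : ∀ s : Set SecT, MeasurableSet (secret ⁻¹' s))
  (share_meas : ∀ p, ∀ s : Set (ShT p), MeasurableSet (share p ⁻¹' s))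

namespace Scheme

variable {P : Type} [Fintype P] [DecidableEq P]

/-- `H(S)`: the entropy of the secret. -/
noncomputable def Hsec (S : Scheme P) : ℝ :=
  letI := S.mΩ; letI := S.secFin
  shannonEntropy S.μ S.secret

/-- `H(X)`: the joint entropy of the shares of the participants in `X`. -/
noncomputable def Hset (S : Scheme P) (X : Finset P) : ℝ :=
  letI := S.mΩ; letI := S.shFin
  shannonEntropy S.μ (fun ω => fun p : {y // y ∈ X} => S.share p.1 ω)

/-- `H(X ∪ {S})`: the joint entropy of the shares of the participants in `X`
together with the secret. -/
noncomputable def HsetS (S : Scheme P) (X : Finset P) : ℝ :=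
  letI := S.mΩ; letI := S.secFin; letI := S.shFin
  shannonEntropy S.μ (fun ω => ((fun p : {y // y ∈ X} => S.share p.1 ω), S.secret ω))

/-- The normalized entropy `h(X) = H(X)/H(S)`. -/
noncomputable def hset (S : Scheme P) (X : Finset P) : ℝ := S.Hset X / S.Hsec

/-- The conditional normalized entropy `h(X|Y) = h(X ∪ Y) − h(Y)`. -/
noncomputable def hcond (S : Scheme P) (X Y : Finset P) : ℝ :=
  S.hset (X ∪ Y) - S.hset Y

/-- `Σ` is a perfect secret sharing scheme for the access structure `Γ`:
the conditional entropy `H(S|X) = H(X ∪ {S}) − H(X)` equals `0` for every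
qualified set `X` and equals `H(S)` for every unqualified set `X`. -/
def IsPerfect (S : Scheme P) (Γ : Finset P → Prop) : Prop :=
  (∀ X : Finset P, Γ X → S.HsetS X - S.Hset X = 0) ∧
  (∀ X : Finset P, ¬ Γ X → S.HsetS X - S.Hset X = S.Hsec)

end Scheme

section general
variable {Ω : Type} [MeasurableSpace Ω] (μ : Measure Ω) [IsProbabilityMeasure μ]
variable {τ σ : Type} [Fintype τ] [Fintype σ]

open Classical in
lemma measure_comp_fiber (F : Ω → τ) (hF : ∀ t, MeasurableSet (F ⁻¹' {t})) (φ : τ → σ) (s : σ) :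
    (μ ((fun ω => φ (F ω)) ⁻¹' {s})).toReal
      = ∑ t, if φ t = s then (μ (F ⁻¹' {t})).toReal else 0 := by
  have hset : (fun ω => φ (F ω)) ⁻¹' {s}
      = ⋃ t ∈ Finset.univ.filter (fun t => φ t = s), F ⁻¹' {t} := by
    ext ω
    simp only [Set.mem_preimage, Set.mem_singleton_iff, Set.mem_iUnion, Finset.mem_filter,
      Finset.mem_univ, true_and]
    constructor
    · intro h; exact ⟨F ω, h, rfl⟩
    · rintro ⟨t, ht, rfl⟩; exact ht
  rw [hset, measure_biUnion_finset ?_ (fun t _ => hF t)]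
  · rw [ENNReal.toReal_sum (fun t _ => measure_ne_top μ _), Finset.sum_filter]
  · intro t1 _ t2 _ hne
    rw [Function.onFun, Set.disjoint_left]
    intro ω h1 h2
    exact hne (by rw [← h1.out, h2.out])

lemma sum_measure_fiber (F : Ω → τ) (hF : ∀ t, MeasurableSet (F ⁻¹' {t})) :
    ∑ t, (μ (F ⁻¹' {t})).toReal = 1 := by
  have h := measure_comp_fiber μ F hF (fun _ => (0 : Fin 1)) 0
  have h0 : ((fun ω : Ω => (0 : Fin 1)) ⁻¹' {0}) = Set.univ := by ext; simp
  simp only [h0, measure_univ, ENNReal.toReal_one, if_pos] at h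
  rw [← h]

lemma negMulLog_sum_le {ι : Type*} (s : Finset ι) (w : ι → ℝ) (hw : ∀ i ∈ s, 0 ≤ w i) :
    Real.negMulLog (∑ i ∈ s, w i) ≤ ∑ i ∈ s, Real.negMulLog (w i) := by
  have hexp : Real.negMulLog (∑ i ∈ s, w i)
      = ∑ i ∈ s, -(w i * Real.log (∑ j ∈ s, w j)) := by
    rw [Real.negMulLog, neg_mul, Finset.sum_mul, ← Finset.sum_neg_distrib]
  rw [hexp]
  apply Finset.sum_le_sum
  intro i hi
  rcases eq_or_lt_of_le (hw i hi) with h0 | h0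
  · simp [← h0]
  · have hle : w i ≤ ∑ j ∈ s, w j := Finset.single_le_sum hw hi
    have hlog : Real.log (w i) ≤ Real.log (∑ j ∈ s, w j) := Real.log_le_log h0 hle
    rw [Real.negMulLog, neg_mul]
    have := mul_le_mul_of_nonneg_left hlog (le_of_lt h0)
    linarith

lemma shannonEntropy_comp_le (F : Ω → τ) (hF : ∀ t, MeasurableSet (F ⁻¹' {t})) (φ : τ → σ) :
    shannonEntropy μ (fun ω => φ (F ω)) ≤ shannonEntropy μ F := by
  classical
  unfold shannonEntropy
  calc ∑ s : σ, Real.negMulLog ((μ ((fun ω => φ (F ω)) ⁻¹' {s})).toReal)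
      = ∑ s : σ, Real.negMulLog (∑ t, if φ t = s then (μ (F ⁻¹' {t})).toReal else 0) := by
        refine Finset.sum_congr rfl fun s _ => ?_
        rw [measure_comp_fiber μ F hF φ s]
    _ ≤ ∑ s : σ, ∑ t, (if φ t = s then Real.negMulLog ((μ (F ⁻¹' {t})).toReal) else 0) := by
        refine Finset.sum_le_sum fun s _ => ?_
        refine le_trans (negMulLog_sum_le _ _ (fun t _ => by positivity)) ?_
        refine le_of_eq (Finset.sum_congr rfl fun t _ => ?_)
        by_cases h : φ t = s <;> simp [h]
    _ = ∑ t : τ, Real.negMulLog ((μ (F ⁻¹' {t})).toReal) := by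
        rw [Finset.sum_comm]
        refine Finset.sum_congr rfl fun t _ => ?_
        rw [Finset.sum_ite_eq Finset.univ (φ t)]
        simp

lemma shannonEntropy_comp_inj (F : Ω → τ) (hF : ∀ t, MeasurableSet (F ⁻¹' {t})) (φ : τ → σ)
    (hφ : Function.Injective φ) :
    shannonEntropy μ (fun ω => φ (F ω)) = shannonEntropy μ F := by
  classical
  unfold shannonEntropy
  calc ∑ s : σ, Real.negMulLog ((μ ((fun ω => φ (F ω)) ⁻¹' {s})).toReal)
      = ∑ s : σ, ∑ t, (if φ t = s then Real.negMulLog ((μ (F ⁻¹' {t})).toReal) else 0) := by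
        refine Finset.sum_congr rfl fun s _ => ?_
        rw [measure_comp_fiber μ F hF φ s]
        by_cases h : ∃ t0, φ t0 = s
        · obtain ⟨t0, ht0⟩ := h
          have hcond : ∀ t, (φ t = s) = (t = t0) := by
            intro t
            apply propext
            constructor
            · intro h'; exact hφ (h'.trans ht0.symm)
            · rintro rfl; exact ht0
          simp only [hcond]
          rw [Finset.sum_ite_eq' Finset.univ t0, Finset.sum_ite_eq' Finset.univ t0]
          simp
        · have hcond : ∀ t, φ t ≠ s := fun t h' => h ⟨t, h'⟩
          simp [hcond]
    _ = ∑ t : τ, Real.negMulLog ((μ (F ⁻¹' {t})).toReal) := by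
        rw [Finset.sum_comm]
        refine Finset.sum_congr rfl fun t _ => ?_
        rw [Finset.sum_ite_eq Finset.univ (φ t)]
        simp

end general

section submod
variable {Ω : Type} [MeasurableSpace Ω] (μ : Measure Ω) [IsProbabilityMeasure μ]
variable {α β γ : Type} [Fintype α] [Fintype β] [Fintype γ]

private lemma negMulLog_sum_expand {ι : Type*} (s : Finset ι) (w : ι → ℝ) :
    Real.negMulLog (∑ i ∈ s, w i) = ∑ i ∈ s, -(w i * Real.log (∑ j ∈ s, w j)) := by
  rw [Real.negMulLog, neg_mul, Finset.sum_mul, ← Finset.sum_neg_distrib]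

private lemma mul_div_mul_left_cancel {x y z : ℝ} (hx : x ≠ 0) : x * (y / (x * z)) = y / z := by
  rcases eq_or_ne z 0 with rfl | hz
  · simp
  · field_simp

private lemma neg_sum_mul {ι : Type*} (s : Finset ι) (w : ι → ℝ) (L : ℝ) :
    -((∑ x ∈ s, w x) * L) = ∑ x ∈ s, -(w x * L) := by
  rw [Finset.sum_mul, ← Finset.sum_neg_distrib]

lemma shannonEntropy_submodular (F : Ω → α × β × γ) (hF : ∀ t, MeasurableSet (F ⁻¹' {t})) :
    shannonEntropy μ F + shannonEntropy μ (fun ω => (F ω).2.2)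
      ≤ shannonEntropy μ (fun ω => ((F ω).1, (F ω).2.2))
        + shannonEntropy μ (fun ω => ((F ω).2.1, (F ω).2.2)) := by
  classical
  set q : α × β × γ → ℝ := fun t => (μ (F ⁻¹' {t})).toReal with hqdef
  have hq0 : ∀ t, 0 ≤ q t := fun t => ENNReal.toReal_nonneg
  set qac : α → γ → ℝ := fun a c => ∑ b, q (a, b, c) with hqacdef
  set qbc : β → γ → ℝ := fun b c => ∑ a, q (a, b, c) with hqbcdef
  set qc : γ → ℝ := fun c => ∑ a, qac a c with hqcdef
  have hqac0 : ∀ a c, 0 ≤ qac a c := fun a c => Finset.sum_nonneg fun b _ => hq0 _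
  have hqbc0 : ∀ b c, 0 ≤ qbc b c := fun b c => Finset.sum_nonneg fun a _ => hq0 _
  have hqc0 : ∀ c, 0 ≤ qc c := fun c => Finset.sum_nonneg fun a _ => hqac0 _ _
  have hqc' : ∀ c, ∑ b, qbc b c = qc c := by
    intro c
    rw [hqcdef, hqbcdef, hqacdef]
    exact Finset.sum_comm
  -- marginals of the measure
  have mac : ∀ a c, (μ ((fun ω => ((F ω).1, (F ω).2.2)) ⁻¹' {(a, c)})).toReal = qac a c := by
    intro a c
    rw [measure_comp_fiber μ F hF (fun t => (t.1, t.2.2)) (a, c)]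
    simp [Fintype.sum_prod_type, Prod.ext_iff, ite_and, Finset.sum_ite_eq, Finset.sum_ite_eq',
      hqacdef, hqdef]
  have mbc : ∀ b c, (μ ((fun ω => ((F ω).2.1, (F ω).2.2)) ⁻¹' {(b, c)})).toReal = qbc b c := by
    intro b c
    rw [measure_comp_fiber μ F hF (fun t => (t.2.1, t.2.2)) (b, c)]
    simp [Fintype.sum_prod_type, Prod.ext_iff, ite_and, Finset.sum_ite_eq, Finset.sum_ite_eq',
      hqbcdef, hqdef]
  have mc : ∀ c, (μ ((fun ω => (F ω).2.2) ⁻¹' {c})).toReal = qc c := by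
    intro c
    rw [measure_comp_fiber μ F hF (fun t => t.2.2) c]
    simp [Fintype.sum_prod_type, ite_and, Finset.sum_ite_eq, Finset.sum_ite_eq',
      hqcdef, hqacdef, hqdef]
  have hsum1 : ∑ c, qc c = 1 := by
    have := sum_measure_fiber μ F hF
    rw [Fintype.sum_prod_type] at this
    rw [hqcdef]
    rw [Finset.sum_comm]
    rw [← this]
    refine Finset.sum_congr rfl fun a _ => ?_
    rw [hqacdef, Fintype.sum_prod_type, Finset.sum_comm]
  -- entropy expansions as triple sums over a, b, c
  have EF : shannonEntropy μ F
      = ∑ a, ∑ b, ∑ c, -(q (a, b, c) * Real.log (q (a, b, c))) := by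
    unfold shannonEntropy
    simp only [Fintype.sum_prod_type, Real.negMulLog_eq_neg, neg_mul]
    rfl
  have Ek : shannonEntropy μ (fun ω => (F ω).2.2)
      = ∑ a, ∑ b, ∑ c, -(q (a, b, c) * Real.log (qc c)) := by
    unfold shannonEntropy
    calc (∑ c, Real.negMulLog ((μ ((fun ω => (F ω).2.2) ⁻¹' {c})).toReal))
        = ∑ c, ∑ a, ∑ b, -(q (a, b, c) * Real.log (qc c)) := by
          refine Finset.sum_congr rfl fun c _ => ?_
          rw [mc c]
          rw [show qc c = ∑ a, ∑ b, q (a, b, c) from rfl]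
          rw [negMulLog_sum_expand]
          refine Finset.sum_congr rfl fun a _ => ?_
          rw [neg_sum_mul]
      _ = ∑ a, ∑ b, ∑ c, -(q (a, b, c) * Real.log (qc c)) := by
          rw [Finset.sum_comm]
          exact Finset.sum_congr rfl fun a _ => Finset.sum_comm
  have Efk : shannonEntropy μ (fun ω => ((F ω).1, (F ω).2.2))
      = ∑ a, ∑ b, ∑ c, -(q (a, b, c) * Real.log (qac a c)) := by
    unfold shannonEntropy
    rw [Fintype.sum_prod_type]
    refine Finset.sum_congr rfl fun a _ => ?_
    calc (∑ c, Real.negMulLog ((μ ((fun ω => ((F ω).1, (F ω).2.2)) ⁻¹' {(a, c)})).toReal))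
        = ∑ c, ∑ b, -(q (a, b, c) * Real.log (qac a c)) := by
          refine Finset.sum_congr rfl fun c _ => ?_
          rw [mac a c]
          rw [show qac a c = ∑ b, q (a, b, c) from rfl]
          rw [negMulLog_sum_expand]
      _ = ∑ b, ∑ c, -(q (a, b, c) * Real.log (qac a c)) := Finset.sum_comm
  have Egk : shannonEntropy μ (fun ω => ((F ω).2.1, (F ω).2.2))
      = ∑ a, ∑ b, ∑ c, -(q (a, b, c) * Real.log (qbc b c)) := by
    unfold shannonEntropy
    rw [Fintype.sum_prod_type]
    calc (∑ b, ∑ c, Real.negMulLog ((μ ((fun ω => ((F ω).2.1, (F ω).2.2)) ⁻¹' {(b, c)})).toReal))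
        = ∑ b, ∑ c, ∑ a, -(q (a, b, c) * Real.log (qbc b c)) := by
          refine Finset.sum_congr rfl fun b _ => Finset.sum_congr rfl fun c _ => ?_
          rw [mbc b c]
          rw [show qbc b c = ∑ a, q (a, b, c) from rfl]
          rw [negMulLog_sum_expand]
      _ = ∑ b, ∑ a, ∑ c, -(q (a, b, c) * Real.log (qbc b c)) := by
          exact Finset.sum_congr rfl fun b _ => Finset.sum_comm
      _ = ∑ a, ∑ b, ∑ c, -(q (a, b, c) * Real.log (qbc b c)) := Finset.sum_comm
  -- the difference as a single triple sum
  have hD : shannonEntropy μ (fun ω => ((F ω).1, (F ω).2.2))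
        + shannonEntropy μ (fun ω => ((F ω).2.1, (F ω).2.2))
        - shannonEntropy μ F - shannonEntropy μ (fun ω => (F ω).2.2)
      = ∑ a, ∑ b, ∑ c, (-(q (a, b, c) * Real.log (qac a c)) + -(q (a, b, c) * Real.log (qbc b c))
          - -(q (a, b, c) * Real.log (q (a, b, c))) - -(q (a, b, c) * Real.log (qc c))) := by
    rw [EF, Ek, Efk, Egk]
    rw [← Finset.sum_add_distrib, ← Finset.sum_sub_distrib, ← Finset.sum_sub_distrib]
    refine Finset.sum_congr rfl fun a _ => ?_
    rw [← Finset.sum_add_distrib, ← Finset.sum_sub_distrib, ← Finset.sum_sub_distrib]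
    refine Finset.sum_congr rfl fun b _ => ?_
    rw [← Finset.sum_add_distrib, ← Finset.sum_sub_distrib, ← Finset.sum_sub_distrib]
  -- per-term lower bound
  have hbound : ∀ a b c,
      q (a, b, c) - (if 0 < qc c then qac a c * qbc b c / qc c else 0)
        ≤ -(q (a, b, c) * Real.log (qac a c)) + -(q (a, b, c) * Real.log (qbc b c))
          - -(q (a, b, c) * Real.log (q (a, b, c))) - -(q (a, b, c) * Real.log (qc c)) := by
    intro a b c
    rcases (hq0 (a, b, c)).lt_or_eq with hq | hq
    · have hac : 0 < qac a c :=
        lt_of_lt_of_le hq (Finset.single_le_sum (fun b' _ => hq0 (a, b', c)) (Finset.mem_univ b))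
      have hbc : 0 < qbc b c :=
        lt_of_lt_of_le hq (Finset.single_le_sum (fun a' _ => hq0 (a', b, c)) (Finset.mem_univ a))
      have hc : 0 < qc c :=
        lt_of_lt_of_le hac (Finset.single_le_sum (fun a' _ => hqac0 a' c) (Finset.mem_univ a))
      rw [if_pos hc]
      have hupos : 0 < qac a c * qbc b c / (q (a, b, c) * qc c) :=
        div_pos (mul_pos hac hbc) (mul_pos hq hc)
      have hlog := Real.log_le_sub_one_of_pos hupos
      have hlogeq : Real.log (qac a c * qbc b c / (q (a, b, c) * qc c))
          = Real.log (qac a c) + Real.log (qbc b c) - Real.log (q (a, b, c)) - Real.log (qc c) := by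
        rw [Real.log_div (mul_pos hac hbc).ne' (mul_pos hq hc).ne', Real.log_mul hac.ne' hbc.ne',
          Real.log_mul hq.ne' hc.ne']
        ring
      have hmul := mul_le_mul_of_nonneg_left hlog hq.le
      have hcancel : q (a, b, c) * (qac a c * qbc b c / (q (a, b, c) * qc c))
          = qac a c * qbc b c / qc c := mul_div_mul_left_cancel hq.ne' 
      have h2 : q (a, b, c) * (qac a c * qbc b c / (q (a, b, c) * qc c) - 1)
          = qac a c * qbc b c / qc c - q (a, b, c) := by
        rw [mul_sub, hcancel, mul_one]
      rw [hlogeq, h2] at hmul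
      nlinarith [hmul]
    · rw [← hq]
      simp only [zero_mul, neg_zero, add_zero, sub_zero, zero_sub, zero_add]
      have h0ite : 0 ≤ (if 0 < qc c then qac a c * qbc b c / qc c else 0) := by
        by_cases hc : 0 < qc c
        · rw [if_pos hc]
          exact div_nonneg (mul_nonneg (hqac0 a c) (hqbc0 b c)) (hqc0 c)
        · rw [if_neg hc]
      linarith
  -- sum of the correction terms
  have perc : ∀ c, (∑ a, ∑ b, (if 0 < qc c then qac a c * qbc b c / qc c else 0)) = qc c := by
    intro c
    by_cases hc : 0 < qc c
    · simp only [if_pos hc]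
      calc ∑ a, ∑ b, qac a c * qbc b c / qc c
          = ∑ a, qac a c * (∑ b, qbc b c) / qc c := by
            refine Finset.sum_congr rfl fun a _ => ?_
            rw [← Finset.sum_div, ← Finset.mul_sum]
        _ = ∑ a, qac a c := by
            refine Finset.sum_congr rfl fun a _ => ?_
            rw [hqc' c, mul_div_assoc, div_self hc.ne', mul_one]
        _ = qc c := rfl
    · have hc0 : qc c = 0 := le_antisymm (not_lt.mp hc) (hqc0 c)
      simp [hc, hc0]
  have hsumIte : ∑ a, ∑ b, ∑ c, (if 0 < qc c then qac a c * qbc b c / qc c else 0) = 1 := by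
    rw [Finset.sum_comm]
    calc ∑ b, ∑ a, ∑ c, (if 0 < qc c then qac a c * qbc b c / qc c else 0)
        = ∑ b, ∑ c, ∑ a, (if 0 < qc c then qac a c * qbc b c / qc c else 0) :=
          Finset.sum_congr rfl fun b _ => Finset.sum_comm
      _ = ∑ c, ∑ b, ∑ a, (if 0 < qc c then qac a c * qbc b c / qc c else 0) :=
          Finset.sum_comm
      _ = 1 := by
          rw [← hsum1]
          refine Finset.sum_congr rfl fun c _ => ?_
          exact Finset.sum_comm.trans (perc c)
  have hsumq : ∑ a, ∑ b, ∑ c, q (a, b, c) = 1 := by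
    have := sum_measure_fiber μ F hF
    rw [Fintype.sum_prod_type] at this
    rw [← this]
    refine Finset.sum_congr rfl fun a _ => ?_
    rw [Fintype.sum_prod_type]
  have hDge : 0 ≤ shannonEntropy μ (fun ω => ((F ω).1, (F ω).2.2))
        + shannonEntropy μ (fun ω => ((F ω).2.1, (F ω).2.2))
        - shannonEntropy μ F - shannonEntropy μ (fun ω => (F ω).2.2) := by
    rw [hD]
    have : (∑ a, ∑ b, ∑ c, (q (a, b, c) - (if 0 < qc c then qac a c * qbc b c / qc c else 0)))
        ≤ ∑ a, ∑ b, ∑ c, (-(q (a, b, c) * Real.log (qac a c)) + -(q (a, b, c) * Real.log (qbc b c))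
          - -(q (a, b, c) * Real.log (q (a, b, c))) - -(q (a, b, c) * Real.log (qc c))) := by
      refine Finset.sum_le_sum fun a _ => Finset.sum_le_sum fun b _ =>
        Finset.sum_le_sum fun c _ => hbound a b c
    refine le_trans (le_of_eq ?_) this
    simp only [Finset.sum_sub_distrib]
    rw [hsumq, hsumIte]
    norm_num
  linarith
end submod

set_option maxHeartbeats 1000000 in
/-- If `X, Y ⊆ P` are nonempty, `r ∈ P`, `X ∪ Y ∉ Γ`, and `X ∪ Y ∪ {r} ∈ Γ`, then
`1 ≤ h(X ∪ {r}) − h(X)`, i.e. `H(S) ≤ H(X ∪ {r}) − H(X)`. -/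

theorem superset_unqualified {P : Type} [Fintype P] [DecidableEq P]
    (Γ : Finset P → Prop) (hΓ : ∀ X Y : Finset P, X ⊆ Y → Γ X → Γ Y)
    (S : Scheme P) (hperf : S.IsPerfect Γ) (hpos : 0 < S.Hsec)
    (X Y : Finset P) (r : P) (hX : X.Nonempty) (hY : Y.Nonempty)
    (hXYq : ¬ Γ (X ∪ Y)) (hXYrq : Γ (X ∪ Y ∪ {r})) :
    S.Hsec ≤ S.Hset (X ∪ {r}) - S.Hset X := by
  classical
  letI := S.mΩ
  haveI := S.prob
  letI := S.secFin
  letI : ∀ p, Fintype (S.ShT p) := S.shFin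
  -- the joint tuple of shares over a finite set of participants
  set tup : (Z : Finset P) → S.Ω → (∀ p : {y // y ∈ Z}, S.ShT p.1) :=
    fun Z ω => fun p => S.share p.1 ω with htupdef
  have htupmeas : ∀ (Z : Finset P) (t : ∀ p : {y // y ∈ Z}, S.ShT p.1),
      MeasurableSet (tup Z ⁻¹' {t}) := by
    intro Z t
    have hEq : tup Z ⁻¹' {t} = ⋂ p : {y // y ∈ Z}, S.share p.1 ⁻¹' {t p} := by
      ext ω
      simp only [Set.mem_preimage, Set.mem_singleton_iff, Set.mem_iInter, htupdef]
      constructor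
      · intro h p; rw [← h]
      · intro h; funext p; exact h p
    rw [hEq]
    exact MeasurableSet.iInter fun p => S.share_meas p.1 {t p}
  -- the key triple of random variables
  set F : S.Ω → S.ShT r × (∀ p : {y // y ∈ Y}, S.ShT p.1) × (∀ p : {y // y ∈ X}, S.ShT p.1) :=
    fun ω => (S.share r ω, tup Y ω, tup X ω) with hFdef
  have hFmeas : ∀ t, MeasurableSet (F ⁻¹' {t}) := by
    intro t
    have hEq : F ⁻¹' {t}
        = (S.share r ⁻¹' {t.1} ∩ tup Y ⁻¹' {t.2.1}) ∩ tup X ⁻¹' {t.2.2} := by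
      ext ω
      simp only [Set.mem_preimage, Set.mem_singleton_iff, Set.mem_inter_iff, hFdef,
        Prod.ext_iff, and_assoc]
    rw [hEq]
    exact ((S.share_meas r _).inter (htupmeas Y _)).inter (htupmeas X _)
  -- recoding maps
  set φ1 : (∀ p : {y // y ∈ X ∪ {r}}, S.ShT p.1)
      → S.ShT r × (∀ p : {y // y ∈ X}, S.ShT p.1) :=
    fun t => (t ⟨r, Finset.mem_union_right _ (Finset.mem_singleton_self r)⟩,
      fun p => t ⟨p.1, Finset.mem_union_left _ p.2⟩) with hφ1def
  have hφ1inj : Function.Injective φ1 := by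
    intro t1 t2 h
    funext p
    rcases Finset.mem_union.mp p.2 with hp | hp
    · have := congrFun (congrArg Prod.snd h) ⟨p.1, hp⟩
      simpa using this
    · have := congrArg Prod.fst h
      have hpr : p = ⟨r, Finset.mem_union_right _ (Finset.mem_singleton_self r)⟩ :=
        Subtype.ext (Finset.mem_singleton.mp hp)
      rw [hpr]
      simpa [hφ1def] using this
  set φ2 : (∀ p : {y // y ∈ X ∪ Y}, S.ShT p.1)
      → (∀ p : {y // y ∈ Y}, S.ShT p.1) × (∀ p : {y // y ∈ X}, S.ShT p.1) :=
    fun t => (fun p => t ⟨p.1, Finset.mem_union_right _ p.2⟩,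
      fun p => t ⟨p.1, Finset.mem_union_left _ p.2⟩) with hφ2def
  have hφ2inj : Function.Injective φ2 := by
    intro t1 t2 h
    funext p
    rcases Finset.mem_union.mp p.2 with hp | hp
    · have := congrFun (congrArg Prod.snd h) ⟨p.1, hp⟩
      simpa using this
    · have := congrFun (congrArg Prod.fst h) ⟨p.1, hp⟩
      simpa using this
  set φ3 : (∀ p : {y // y ∈ X ∪ Y ∪ {r}}, S.ShT p.1)
      → S.ShT r × (∀ p : {y // y ∈ Y}, S.ShT p.1) × (∀ p : {y // y ∈ X}, S.ShT p.1) :=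
    fun t => (t ⟨r, Finset.mem_union_right _ (Finset.mem_singleton_self r)⟩,
      fun p => t ⟨p.1, Finset.mem_union_left _ (Finset.mem_union_right _ p.2)⟩,
      fun p => t ⟨p.1, Finset.mem_union_left _ (Finset.mem_union_left _ p.2)⟩) with hφ3def
  have hφ3inj : Function.Injective φ3 := by
    intro t1 t2 h
    funext p
    rcases Finset.mem_union.mp p.2 with hp | hp
    · rcases Finset.mem_union.mp hp with hp' | hp'
      · have := congrFun (congrArg (fun z => z.2.2) h) ⟨p.1, hp'⟩
        simpa using this
      · have := congrFun (congrArg (fun z => z.2.1) h) ⟨p.1, hp'⟩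
        simpa using this
    · have := congrArg Prod.fst h
      have hpr : p = ⟨r, Finset.mem_union_right _ (Finset.mem_singleton_self r)⟩ :=
        Subtype.ext (Finset.mem_singleton.mp hp)
      rw [hpr]
      simpa [hφ3def] using this
  -- identification of the various entropies
  have E1 : S.Hset (X ∪ {r}) = shannonEntropy S.μ (fun ω => ((F ω).1, (F ω).2.2)) := by
    unfold Scheme.Hset
    exact (shannonEntropy_comp_inj S.μ (tup (X ∪ {r})) (htupmeas _) φ1 hφ1inj).symm
  have E2 : S.Hset (X ∪ Y) = shannonEntropy S.μ (fun ω => ((F ω).2.1, (F ω).2.2)) := by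
    unfold Scheme.Hset
    exact (shannonEntropy_comp_inj S.μ (tup (X ∪ Y)) (htupmeas _) φ2 hφ2inj).symm
  have E3 : S.Hset (X ∪ Y ∪ {r}) = shannonEntropy S.μ F := by
    unfold Scheme.Hset
    exact (shannonEntropy_comp_inj S.μ (tup (X ∪ Y ∪ {r})) (htupmeas _) φ3 hφ3inj).symm
  have E4 : S.Hset X = shannonEntropy S.μ (fun ω => (F ω).2.2) := by
    unfold Scheme.Hset
    rfl
  -- submodularity
  have hsub := shannonEntropy_submodular S.μ F hFmeas
  rw [← E1, ← E2, ← E3, ← E4] at hsub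
  -- monotonicity for the sets together with the secret
  set G : S.Ω → (∀ p : {y // y ∈ X ∪ Y ∪ {r}}, S.ShT p.1) × S.SecT :=
    fun ω => (tup (X ∪ Y ∪ {r}) ω, S.secret ω) with hGdef
  have hGmeas : ∀ t, MeasurableSet (G ⁻¹' {t}) := by
    intro t
    have hEq : G ⁻¹' {t} = tup (X ∪ Y ∪ {r}) ⁻¹' {t.1} ∩ S.secret ⁻¹' {t.2} := by
      ext ω
      simp only [Set.mem_preimage, Set.mem_singleton_iff, Set.mem_inter_iff, hGdef,
        Prod.ext_iff]
    rw [hEq]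
    exact (htupmeas _ _).inter (S.secret_meas {t.2})
  set ψ : (∀ p : {y // y ∈ X ∪ Y ∪ {r}}, S.ShT p.1) × S.SecT
      → (∀ p : {y // y ∈ X ∪ Y}, S.ShT p.1) × S.SecT :=
    fun ts => (fun p => ts.1 ⟨p.1, Finset.mem_union_left _ p.2⟩, ts.2) with hψdef
  have hmono : S.HsetS (X ∪ Y) ≤ S.HsetS (X ∪ Y ∪ {r}) := by
    unfold Scheme.HsetS
    exact shannonEntropy_comp_le S.μ G hGmeas ψ
  -- perfectness
  have hp1 := hperf.2 (X ∪ Y) hXYq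
  have hp2 := hperf.1 (X ∪ Y ∪ {r}) hXYrq
  linarith
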